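/- Let $H$ be a cocommutative Hopf algebra over a field $F$. For an $H$-module $M$, let $\mathrm{Fin}(M)$ denote the largest $H$-submodule of $M$ that is a union (sum) of finite-dimensional $H$-submodules. Then for any $H$-modules $M, N$, one has $\mathrm{Fin}(M \otimes N) = \mathrm{Fin}(M) \otimes \mathrm{Fin}(N)$ as submodules of $M \otimes N$; in other words, $\mathrm{Fin}$ is a monoidal functor on $H$-modules. -/

import Mathlib

set_option linter.unusedSectionVars false
set_option maxHeartbeats 1000000

open TensorProduct

variable (F : Type*) [Field F] (H : Type*) [Ring H] [HopfAlgebra F H]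

/-- The action of `h ∈ H` on `M ⊗[F] N` via the comultiplication of `H`. -/
noncomputable def hopfTensorAction (M N : Type*) [AddCommGroup M] [Module F M] [Module H M]
    [IsScalarTower F H M] [SMulCommClass H F M]
    [AddCommGroup N] [Module F N] [Module H N]
    [IsScalarTower F H N] [SMulCommClass H F N] :
    H →ₗ[F] (M ⊗[F] N) →ₗ[F] M ⊗[F] N :=
  (TensorProduct.homTensorHomMap (RingHom.id F) M N M N).comp
    ((TensorProduct.map (Algebra.lsmul F F M).toLinearMap
        (Algebra.lsmul F F N).toLinearMap).comp Coalgebra.comul)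

/-- `Fin M`: the largest `H`-submodule of `M` which is a union of finite-dimensional
`H`-submodules, i.e. the sum of all finite-dimensional `H`-submodules. -/
noncomputable def finPart (M : Type*) [AddCommGroup M] [Module F M] [Module H M]
    [IsScalarTower F H M] : Submodule H M :=
  sSup {p : Submodule H M | FiniteDimensional F (p.restrictScalars F)}

section Hopf
open LinearMap Coalgebra

/-- Auxiliary map `b ⊗ c ↦ S(b) * c`. -/
noncomputable def gamAux : H ⊗[F] H →ₗ[F] H :=
  LinearMap.mul' F H ∘ₗ (HopfAlgebra.antipode (R := F)).rTensor H

/-- Auxiliary map `a ⊗ (b ⊗ c) ↦ b ⊗ S(a) * c`. -/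
noncomputable def chi1 : H ⊗[F] (H ⊗[F] H) →ₗ[F] H ⊗[F] H :=
  (LinearMap.lTensor H (gamAux F H)) ∘ₗ (TensorProduct.assoc F H H H).toLinearMap
    ∘ₗ (LinearMap.rTensor H (TensorProduct.comm F H H).toLinearMap)
    ∘ₗ (TensorProduct.assoc F H H H).symm.toLinearMap

/-- Auxiliary map `a ⊗ (b ⊗ c) ↦ (S(a) * b) ⊗ c`. -/
noncomputable def chi2 : H ⊗[F] (H ⊗[F] H) →ₗ[F] H ⊗[F] H :=
  (LinearMap.rTensor H (gamAux F H)) ∘ₗ (TensorProduct.assoc F H H H).symm.toLinearMap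

lemma chi1_tmul (a b c : H) :
    chi1 F H (a ⊗ₜ (b ⊗ₜ c)) = b ⊗ₜ (HopfAlgebra.antipode (R := F) a * c) := by
  simp [chi1, gamAux]

lemma chi2_tmul (a b c : H) :
    chi2 F H (a ⊗ₜ (b ⊗ₜ c)) = (HopfAlgebra.antipode (R := F) a * b) ⊗ₜ c := by
  simp [chi2, gamAux]

lemma gam_comp_comul : gamAux F H ∘ₗ Coalgebra.comul
    = (Algebra.linearMap F H) ∘ₗ Coalgebra.counit := by
  rw [gamAux, LinearMap.comp_assoc, HopfAlgebra.mul_antipode_rTensor_comul]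

/-- In Sweedler notation: `∑ h₂ ⊗ S(h₁) h₃ = h ⊗ 1` (uses cocommutativity). -/
lemma mapLemma1
    (hcocomm : (TensorProduct.comm F H H).toLinearMap.comp Coalgebra.comul
        = (Coalgebra.comul : H →ₗ[F] H ⊗[F] H)) (h : H) :
    chi1 F H ((Coalgebra.comul (R := F) (A := H)).lTensor H (Coalgebra.comul h))
      = h ⊗ₜ[F] (1 : H) := by
  have step1 : (Coalgebra.comul (R := F) (A := H)).lTensor H (Coalgebra.comul h)
      = TensorProduct.assoc F H H H
          ((Coalgebra.comul (R := F) (A := H)).rTensor H (Coalgebra.comul h)) :=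
    (Coalgebra.coassoc_apply h).symm
  rw [step1, chi1]
  simp only [LinearMap.comp_apply, LinearEquiv.coe_coe, LinearEquiv.symm_apply_apply]
  rw [← LinearMap.rTensor_comp_apply, hcocomm]
  rw [Coalgebra.coassoc_apply h, ← LinearMap.lTensor_comp_apply, gam_comp_comul,
    LinearMap.lTensor_comp_apply]
  have := LinearMap.congr_fun (Coalgebra.lTensor_counit_comp_comul (R := F) (A := H)) h
  simp only [LinearMap.comp_apply] at this
  rw [this]
  simp

/-- In Sweedler notation: `∑ S(h₁) h₂ ⊗ h₃ = 1 ⊗ h`. -/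
lemma mapLemma2 (h : H) :
    chi2 F H ((Coalgebra.comul (R := F) (A := H)).lTensor H (Coalgebra.comul h))
      = (1 : H) ⊗ₜ[F] h := by
  rw [chi2]
  simp only [LinearMap.comp_apply, LinearEquiv.coe_coe]
  rw [Coalgebra.coassoc_symm_apply, ← LinearMap.rTensor_comp_apply, gam_comp_comul,
    LinearMap.rTensor_comp_apply]
  have := LinearMap.congr_fun (Coalgebra.rTensor_counit_comp_comul (R := F) (A := H)) h
  simp only [LinearMap.comp_apply] at this
  rw [this]
  simp

end Hopf

section Act
open LinearMap Coalgebra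

variable (M N : Type*) [AddCommGroup M] [Module F M] [Module H M]
    [IsScalarTower F H M] [SMulCommClass H F M]
    [AddCommGroup N] [Module F N] [Module H N]
    [IsScalarTower F H N] [SMulCommClass H F N]

/-- The operator form of the tensor action, before composing with comultiplication. -/
noncomputable def thetAux : H ⊗[F] H →ₗ[F] (M ⊗[F] N) →ₗ[F] M ⊗[F] N :=
  (TensorProduct.homTensorHomMap (RingHom.id F) M N M N).comp
    (TensorProduct.map (Algebra.lsmul F F M).toLinearMap (Algebra.lsmul F F N).toLinearMap)

lemma hopfTensorAction_eq (h : H) :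
    hopfTensorAction F H M N h = thetAux F H M N (Coalgebra.comul h) := rfl

lemma thetAux_tmul (b c : H) (m : M) (n : N) :
    thetAux F H M N (b ⊗ₜ c) (m ⊗ₜ n) = (b • m) ⊗ₜ (c • n) := by
  simp [thetAux]

/-- Action of `h` on the left factor only. -/
noncomputable def rhoMlin : H →ₗ[F] (M ⊗[F] N) →ₗ[F] M ⊗[F] N :=
  (LinearMap.rTensorHom N) ∘ₗ (Algebra.lsmul F F M).toLinearMap

/-- Action of `h` on the right factor only. -/
noncomputable def rhoNlin : H →ₗ[F] (M ⊗[F] N) →ₗ[F] M ⊗[F] N :=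
  (LinearMap.lTensorHom M) ∘ₗ (Algebra.lsmul F F N).toLinearMap

lemma rhoMlin_apply (h : H) :
    rhoMlin F H M N h = LinearMap.rTensor N ((Algebra.lsmul F F M).toLinearMap h) := rfl

lemma rhoNlin_apply (h : H) :
    rhoNlin F H M N h = LinearMap.lTensor M ((Algebra.lsmul F F N).toLinearMap h) := rfl

/-- `a ⊗ y ↦ ρN(S a) ∘ (action of y)`. -/
noncomputable def lam1 : H ⊗[F] H →ₗ[F] (M ⊗[F] N) →ₗ[F] M ⊗[F] N :=
  TensorProduct.lift
    (((LinearMap.llcomp F (M ⊗[F] N) (M ⊗[F] N) (M ⊗[F] N)) ∘ₗ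
        (rhoNlin F H M N) ∘ₗ (HopfAlgebra.antipode (R := F))).compl₂
      (hopfTensorAction F H M N))

lemma lam1_tmul (a y : H) :
    lam1 F H M N (a ⊗ₜ y)
      = (rhoNlin F H M N (HopfAlgebra.antipode (R := F) a)) ∘ₗ
          hopfTensorAction F H M N y := rfl

/-- `a ⊗ y ↦ ρM(S a) ∘ (action of y)`. -/
noncomputable def lam2 : H ⊗[F] H →ₗ[F] (M ⊗[F] N) →ₗ[F] M ⊗[F] N :=
  TensorProduct.lift
    (((LinearMap.llcomp F (M ⊗[F] N) (M ⊗[F] N) (M ⊗[F] N)) ∘ₗ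
        (rhoMlin F H M N) ∘ₗ (HopfAlgebra.antipode (R := F))).compl₂
      (hopfTensorAction F H M N))

lemma lam2_tmul (a y : H) :
    lam2 F H M N (a ⊗ₜ y)
      = (rhoMlin F H M N (HopfAlgebra.antipode (R := F) a)) ∘ₗ
          hopfTensorAction F H M N y := rfl

lemma rhoN_thet (a : H) (z : H ⊗[F] H) :
    (rhoNlin F H M N (HopfAlgebra.antipode (R := F) a)) ∘ₗ thetAux F H M N z
      = thetAux F H M N (chi1 F H (a ⊗ₜ z)) := by
  induction z using TensorProduct.induction_on with
  | zero => simp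
  | tmul b c =>
    rw [chi1_tmul]
    apply TensorProduct.ext'
    intro m n
    simp only [LinearMap.comp_apply, thetAux_tmul, rhoNlin_apply]
    simp [mul_smul]
  | add u v hu hv =>
    simp only [tmul_add, map_add, LinearMap.comp_add, hu, hv]

lemma rhoM_thet (a : H) (z : H ⊗[F] H) :
    (rhoMlin F H M N (HopfAlgebra.antipode (R := F) a)) ∘ₗ thetAux F H M N z
      = thetAux F H M N (chi2 F H (a ⊗ₜ z)) := by
  induction z using TensorProduct.induction_on with
  | zero => simp
  | tmul b c =>
    rw [chi2_tmul]
    apply TensorProduct.ext'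
    intro m n
    simp only [LinearMap.comp_apply, thetAux_tmul, rhoMlin_apply]
    simp [mul_smul]
  | add u v hu hv =>
    simp only [tmul_add, map_add, LinearMap.comp_add, hu, hv]

lemma lam1_eq (z : H ⊗[F] H) :
    lam1 F H M N z
      = thetAux F H M N (chi1 F H ((Coalgebra.comul (R := F) (A := H)).lTensor H z)) := by
  induction z using TensorProduct.induction_on with
  | zero => simp
  | tmul a y =>
    rw [lam1_tmul, LinearMap.lTensor_tmul, hopfTensorAction_eq, rhoN_thet]
  | add u v hu hv => simp only [map_add, hu, hv]

lemma lam2_eq (z : H ⊗[F] H) :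
    lam2 F H M N z
      = thetAux F H M N (chi2 F H ((Coalgebra.comul (R := F) (A := H)).lTensor H z)) := by
  induction z using TensorProduct.induction_on with
  | zero => simp
  | tmul a y =>
    rw [lam2_tmul, LinearMap.lTensor_tmul, hopfTensorAction_eq, rhoM_thet]
  | add u v hu hv => simp only [map_add, hu, hv]

/-- Key identity: `h ⊗ 1` acting on the left factor equals `∑ ρN(S h₁) ∘ A(h₂)`. -/
lemma key1
    (hcocomm : (TensorProduct.comm F H H).toLinearMap.comp Coalgebra.comul
        = (Coalgebra.comul : H →ₗ[F] H ⊗[F] H)) (h : H) :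
    rhoMlin F H M N h = lam1 F H M N (Coalgebra.comul h) := by
  rw [lam1_eq, mapLemma1 F H hcocomm]
  apply TensorProduct.ext'
  intro m n
  rw [thetAux_tmul, rhoMlin_apply]
  simp

/-- Key identity: `1 ⊗ h` acting on the right factor equals `∑ ρM(S h₁) ∘ A(h₂)`. -/
lemma key2 (h : H) :
    rhoNlin F H M N h = lam2 F H M N (Coalgebra.comul h) := by
  rw [lam2_eq, mapLemma2 F H]
  apply TensorProduct.ext'
  intro m n
  rw [thetAux_tmul, rhoNlin_apply]
  simp

end Act

section Contract
variable (M N : Type*) [AddCommGroup M] [Module F M] [AddCommGroup N] [Module F N]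

/-- Contraction against a functional on the right factor: `m ⊗ n ↦ f n • m`. -/
noncomputable def cR (f : N →ₗ[F] F) : M ⊗[F] N →ₗ[F] M :=
  (TensorProduct.rid F M).toLinearMap ∘ₗ (f.lTensor M)

lemma cR_tmul (f : N →ₗ[F] F) (m : M) (n : N) : cR F M N f (m ⊗ₜ n) = f n • m := by
  simp [cR]

/-- Contraction against a functional on the left factor: `m ⊗ n ↦ g m • n`. -/
noncomputable def cL (g : M →ₗ[F] F) : M ⊗[F] N →ₗ[F] N :=
  (TensorProduct.lid F N).toLinearMap ∘ₗ (g.rTensor N)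

lemma cL_tmul (g : M →ₗ[F] F) (m : M) (n : N) : cL F M N g (m ⊗ₜ n) = g m • n := by
  simp [cL]

/-- Refine the left components of a finite decomposition of `w` through a basis, obtaining a
decomposition whose right components are contractions of `w` and whose left components stay
in any submodule containing the original left components. -/
lemma decompR (w : M ⊗[F] N) (P : Submodule F M) {ι : Type*} [Fintype ι]
    (c : ι → M) (e : ι → N) (hc : ∀ j, c j ∈ P) (hw : w = ∑ j, c j ⊗ₜ[F] e j) :
    ∃ (d : ℕ) (b : Fin d → M) (t : Fin d → N), (∀ k, b k ∈ P) ∧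
      (∀ k, ∃ g : M →ₗ[F] F, t k = cL F M N g w) ∧ w = ∑ k, b k ⊗ₜ[F] t k := by
  classical
  set Q : Submodule F M := Submodule.span F (Set.range c) with hQ
  have hQP : Q ≤ P := Submodule.span_le.mpr (by rintro _ ⟨j, rfl⟩; exact hc j)
  have hfd : FiniteDimensional F Q := FiniteDimensional.span_of_finite F (Set.finite_range c)
  let b := Module.finBasis F Q
  have hcQ : ∀ j, c j ∈ Q := fun j => Submodule.subset_span ⟨j, rfl⟩
  set r : ι → Fin (Module.finrank F Q) → F := fun j k => b.repr ⟨c j, hcQ j⟩ k with hr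
  choose g hg using fun k => LinearMap.exists_extend (p := Q) (b.coord k)
  have hgc : ∀ k j, g k (c j) = r j k := by
    intro k j
    have : g k (Q.subtype ⟨c j, hcQ j⟩) = b.coord k ⟨c j, hcQ j⟩ := by
      rw [← LinearMap.comp_apply, hg k]
    simpa [Module.Basis.coord_apply] using this
  refine ⟨Module.finrank F Q, fun k => (b k : M), fun k => ∑ j, r j k • e j, ?_, ?_, ?_⟩
  · exact fun k => hQP (b k).2
  · intro k
    refine ⟨g k, ?_⟩
    rw [hw, map_sum]
    simp only [cL_tmul, hgc]
  · rw [hw]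
    have expand : ∀ j, c j = ∑ k, r j k • (b k : M) := by
      intro j
      have hrep := b.sum_repr ⟨c j, hcQ j⟩
      calc c j = ((⟨c j, hcQ j⟩ : Q) : M) := rfl
        _ = ((∑ k, b.repr ⟨c j, hcQ j⟩ k • b k : Q) : M) := by rw [hrep]
        _ = ∑ k, r j k • (b k : M) := by
            rw [Submodule.coe_sum]; simp [hr]
    calc ∑ j, c j ⊗ₜ[F] e j = ∑ j, ∑ k, r j k • ((b k : M) ⊗ₜ[F] e j) := by
          refine Finset.sum_congr rfl fun j _ => ?_
          rw [expand j, sum_tmul]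
          exact Finset.sum_congr rfl fun k _ => by rw [smul_tmul']
      _ = ∑ k, ∑ j, r j k • ((b k : M) ⊗ₜ[F] e j) := Finset.sum_comm
      _ = ∑ k, (b k : M) ⊗ₜ[F] (∑ j, r j k • e j) := by
          refine Finset.sum_congr rfl fun k _ => ?_
          rw [tmul_sum]
          exact Finset.sum_congr rfl fun j _ => by rw [tmul_smul]

/-- Mirror version of `decompR`. -/
lemma decompL (w : M ⊗[F] N) (P : Submodule F N) {ι : Type*} [Fintype ι]
    (c : ι → M) (e : ι → N) (he : ∀ j, e j ∈ P) (hw : w = ∑ j, c j ⊗ₜ[F] e j) :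
    ∃ (d : ℕ) (b : Fin d → M) (t : Fin d → N), (∀ k, t k ∈ P) ∧
      (∀ k, ∃ f : N →ₗ[F] F, b k = cR F M N f w) ∧ w = ∑ k, b k ⊗ₜ[F] t k := by
  classical
  set Q : Submodule F N := Submodule.span F (Set.range e) with hQ
  have hQP : Q ≤ P := Submodule.span_le.mpr (by rintro _ ⟨j, rfl⟩; exact he j)
  have hfd : FiniteDimensional F Q := FiniteDimensional.span_of_finite F (Set.finite_range e)
  let b := Module.finBasis F Q
  have heQ : ∀ j, e j ∈ Q := fun j => Submodule.subset_span ⟨j, rfl⟩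
  set r : ι → Fin (Module.finrank F Q) → F := fun j k => b.repr ⟨e j, heQ j⟩ k with hr
  choose g hg using fun k => LinearMap.exists_extend (p := Q) (b.coord k)
  have hge : ∀ k j, g k (e j) = r j k := by
    intro k j
    have : g k (Q.subtype ⟨e j, heQ j⟩) = b.coord k ⟨e j, heQ j⟩ := by
      rw [← LinearMap.comp_apply, hg k]
    simpa [Module.Basis.coord_apply] using this
  refine ⟨Module.finrank F Q, fun k => ∑ j, r j k • c j, fun k => (b k : N), ?_, ?_, ?_⟩
  · exact fun k => hQP (b k).2
  · intro k
    refine ⟨g k, ?_⟩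
    rw [hw, map_sum]
    simp only [cR_tmul, hge]
  · rw [hw]
    have expand : ∀ j, e j = ∑ k, r j k • (b k : N) := by
      intro j
      have hrep := b.sum_repr ⟨e j, heQ j⟩
      calc e j = ((⟨e j, heQ j⟩ : Q) : N) := rfl
        _ = ((∑ k, b.repr ⟨e j, heQ j⟩ k • b k : Q) : N) := by rw [hrep]
        _ = ∑ k, r j k • (b k : N) := by
            rw [Submodule.coe_sum]; simp [hr]
    calc ∑ j, c j ⊗ₜ[F] e j = ∑ j, ∑ k, r j k • (c j ⊗ₜ[F] (b k : N)) := by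
          refine Finset.sum_congr rfl fun j _ => ?_
          rw [expand j, tmul_sum]
          exact Finset.sum_congr rfl fun k _ => by rw [tmul_smul]
      _ = ∑ k, ∑ j, r j k • (c j ⊗ₜ[F] (b k : N)) := Finset.sum_comm
      _ = ∑ k, (∑ j, r j k • c j) ⊗ₜ[F] (b k : N) := by
          refine Finset.sum_congr rfl fun k _ => ?_
          rw [sum_tmul]
          exact Finset.sum_congr rfl fun j _ => by rw [smul_tmul']

end Contract

section Inter
variable (M N : Type*) [AddCommGroup M] [Module F M] [Module H M]
    [IsScalarTower F H M] [SMulCommClass H F M]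
    [AddCommGroup N] [Module F N] [Module H N]
    [IsScalarTower F H N] [SMulCommClass H F N]

lemma cR_rhoM (f : N →ₗ[F] F) (h : H) (w : M ⊗[F] N) :
    cR F M N f (rhoMlin F H M N h w) = h • cR F M N f w := by
  induction w using TensorProduct.induction_on with
  | zero => simp
  | tmul m n =>
    rw [rhoMlin_apply]
    simp only [LinearMap.rTensor_tmul, cR_tmul]
    exact (smul_comm h (f n) m).symm
  | add u v hu hv => simp only [map_add, smul_add, hu, hv]

lemma cR_rhoN (f : N →ₗ[F] F) (a : H) (w : M ⊗[F] N) :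
    cR F M N f (rhoNlin F H M N a w)
      = cR F M N (f ∘ₗ ((Algebra.lsmul F F N).toLinearMap a)) w := by
  induction w using TensorProduct.induction_on with
  | zero => simp
  | tmul m n =>
    rw [rhoNlin_apply]
    simp only [LinearMap.lTensor_tmul, cR_tmul]
    rfl
  | add u v hu hv => simp only [map_add, hu, hv]

lemma cL_rhoN (g : M →ₗ[F] F) (h : H) (w : M ⊗[F] N) :
    cL F M N g (rhoNlin F H M N h w) = h • cL F M N g w := by
  induction w using TensorProduct.induction_on with
  | zero => simp
  | tmul m n =>
    rw [rhoNlin_apply]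
    simp only [LinearMap.lTensor_tmul, cL_tmul]
    exact (smul_comm h (g m) n).symm
  | add u v hu hv => simp only [map_add, smul_add, hu, hv]

lemma cL_rhoM (g : M →ₗ[F] F) (a : H) (w : M ⊗[F] N) :
    cL F M N g (rhoMlin F H M N a w)
      = cL F M N (g ∘ₗ ((Algebra.lsmul F F M).toLinearMap a)) w := by
  induction w using TensorProduct.induction_on with
  | zero => simp
  | tmul m n =>
    rw [rhoMlin_apply]
    simp only [LinearMap.rTensor_tmul, cL_tmul]
    rfl
  | add u v hu hv => simp only [map_add, hu, hv]

end Inter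

/-- For a cocommutative Hopf algebra `H`, `Fin (M ⊗ N) = Fin M ⊗ Fin N`: the sum of all
finite-dimensional subspaces of `M ⊗ N` invariant under the comultiplication action of `H`
equals the image of `Fin M ⊗ Fin N` in `M ⊗ N`.  In other words `Fin` is monoidal. -/
theorem finPart_tensor
    (hcocomm : (TensorProduct.comm F H H).toLinearMap.comp Coalgebra.comul
        = (Coalgebra.comul : H →ₗ[F] H ⊗[F] H))
    (M N : Type*) [AddCommGroup M] [Module F M] [Module H M]
    [IsScalarTower F H M] [SMulCommClass H F M]
    [AddCommGroup N] [Module F N] [Module H N]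
    [IsScalarTower F H N] [SMulCommClass H F N] :
    sSup {p : Submodule F (M ⊗[F] N) |
        (∀ h : H, ∀ v ∈ p, hopfTensorAction F H M N h v ∈ p) ∧ FiniteDimensional F p}
      = LinearMap.range
          (TensorProduct.mapIncl ((finPart F H M).restrictScalars F)
            ((finPart F H N).restrictScalars F)) := by
  classical
  apply le_antisymm
  · -- hard direction: every invariant f.d. subspace lies in Fin M ⊗ Fin N
    apply sSup_le
    rintro V ⟨hV1, hV2⟩
    set genM : Set M := {x | ∃ v ∈ V, ∃ f : N →ₗ[F] F, cR F M N f v = x} with hgenM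
    set M0 : Submodule F M := Submodule.span F genM with hM0
    set genN : Set N := {y | ∃ v ∈ V, ∃ g : M →ₗ[F] F, cL F M N g v = y} with hgenN
    set N0 : Submodule F N := Submodule.span F genN with hN0
    -- H-stability of M0
    have hM0st : ∀ (h : H) (x : M), x ∈ M0 → h • x ∈ M0 := by
      intro h x hx
      have hsub : genM ⊆ ↑(M0.comap ((Algebra.lsmul F F M).toLinearMap h)) := by
        rintro _ ⟨v, hv, f, rfl⟩
        simp only [SetLike.mem_coe, Submodule.mem_comap]
        show h • cR F M N f v ∈ M0
        rw [← cR_rhoM F H M N f h v, key1 F H M N hcocomm h]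
        have hz : ∀ z : H ⊗[F] H, cR F M N f (lam1 F H M N z v) ∈ M0 := by
          intro z
          induction z using TensorProduct.induction_on with
          | zero => simpa using M0.zero_mem
          | tmul a y =>
            rw [lam1_tmul]
            simp only [LinearMap.comp_apply]
            rw [cR_rhoN]
            exact Submodule.subset_span
              ⟨hopfTensorAction F H M N y v, hV1 y v hv, _, rfl⟩
          | add u w hu hw =>
            rw [map_add, LinearMap.add_apply, map_add]
            exact M0.add_mem hu hw
        exact hz _
      exact Submodule.span_le.mpr hsub hx
    -- H-stability of N0
    have hN0st : ∀ (h : H) (y : N), y ∈ N0 → h • y ∈ N0 := by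
      intro h y hy
      have hsub : genN ⊆ ↑(N0.comap ((Algebra.lsmul F F N).toLinearMap h)) := by
        rintro _ ⟨v, hv, g, rfl⟩
        simp only [SetLike.mem_coe, Submodule.mem_comap]
        show h • cL F M N g v ∈ N0
        rw [← cL_rhoN F H M N g h v, key2 F H M N h]
        have hz : ∀ z : H ⊗[F] H, cL F M N g (lam2 F H M N z v) ∈ N0 := by
          intro z
          induction z using TensorProduct.induction_on with
          | zero => simpa using N0.zero_mem
          | tmul a y' =>
            rw [lam2_tmul]
            simp only [LinearMap.comp_apply]
            rw [cL_rhoM]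
            exact Submodule.subset_span
              ⟨hopfTensorAction F H M N y' v, hV1 y' v hv, _, rfl⟩
          | add u w hu hw =>
            rw [map_add, LinearMap.add_apply, map_add]
            exact N0.add_mem hu hw
        exact hz _
      exact Submodule.span_le.mpr hsub hy
    -- finite dimensionality of M0 and N0
    have hVfg : V.FG := Module.Finite.iff_fg.mp hV2
    obtain ⟨s, hs⟩ := hVfg
    obtain ⟨M', N', hM'fin, hN'fin, hssub⟩ :=
      TensorProduct.exists_finite_submodule_of_setFinite (R := F)
        (↑s : Set (M ⊗[F] N)) (Finset.finite_toSet s)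
    have hVsub : V ≤ LinearMap.range (TensorProduct.mapIncl M' N') := by
      rw [← hs]; exact Submodule.span_le.mpr hssub
    have hM0fd : FiniteDimensional F M0 := by
      haveI := hM'fin
      have hle : M0 ≤ M' := by
        apply Submodule.span_le.mpr
        rintro _ ⟨v, hv, f, rfl⟩
        have hcomap : LinearMap.range (TensorProduct.mapIncl M' N')
            ≤ M'.comap (cR F M N f) := by
          rw [TensorProduct.range_mapIncl, Submodule.map₂_eq_span_image2]
          apply Submodule.span_le.mpr
          rintro _ ⟨m, hm, n, hn, rfl⟩
          simp only [SetLike.mem_coe, Submodule.mem_comap, cR_tmul]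
          exact M'.smul_mem _ hm
        exact hcomap (hVsub hv)
      exact Submodule.finiteDimensional_of_le hle
    have hN0fd : FiniteDimensional F N0 := by
      haveI := hN'fin
      have hle : N0 ≤ N' := by
        apply Submodule.span_le.mpr
        rintro _ ⟨v, hv, g, rfl⟩
        have hcomap : LinearMap.range (TensorProduct.mapIncl M' N')
            ≤ N'.comap (cL F M N g) := by
          rw [TensorProduct.range_mapIncl, Submodule.map₂_eq_span_image2]
          apply Submodule.span_le.mpr
          rintro _ ⟨m, hm, n, hn, rfl⟩
          simp only [SetLike.mem_coe, Submodule.mem_comap, cL_tmul]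
          exact N'.smul_mem _ hn
        exact hcomap (hVsub hv)
      exact Submodule.finiteDimensional_of_le hle
    -- M0 and N0 as H-submodules, contained in finPart
    let M0H : Submodule H M :=
      { carrier := M0
        add_mem' := fun ha hb => M0.add_mem ha hb
        zero_mem' := M0.zero_mem
        smul_mem' := fun h {x} hx => hM0st h x hx }
    have hM0res : M0H.restrictScalars F = M0 := Submodule.ext fun x => Iff.rfl
    have hM0le : M0 ≤ (finPart F H M).restrictScalars F := by
      intro x hx
      rw [Submodule.restrictScalars_mem]
      exact Submodule.mem_sSup_of_mem
        (show FiniteDimensional F (M0H.restrictScalars F) by rw [hM0res]; exact hM0fd)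
        (show x ∈ M0H from hx)
    let N0H : Submodule H N :=
      { carrier := N0
        add_mem' := fun ha hb => N0.add_mem ha hb
        zero_mem' := N0.zero_mem
        smul_mem' := fun h {x} hx => hN0st h x hx }
    have hN0res : N0H.restrictScalars F = N0 := Submodule.ext fun x => Iff.rfl
    have hN0le : N0 ≤ (finPart F H N).restrictScalars F := by
      intro x hx
      rw [Submodule.restrictScalars_mem]
      exact Submodule.mem_sSup_of_mem
        (show FiniteDimensional F (N0H.restrictScalars F) by rw [hN0res]; exact hN0fd)
        (show x ∈ N0H from hx)
    -- conclude: every element of V lies in the image of M0 ⊗ N0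
    intro v hv
    obtain ⟨sP, hsP⟩ := TensorProduct.exists_finset (R := F) v
    have hv2 : v = ∑ j : ↥sP, ((j : M × N).1 ⊗ₜ[F] (j : M × N).2) := by
      rw [hsP]
      exact (Finset.sum_coe_sort sP fun p => p.1 ⊗ₜ[F] p.2).symm
    obtain ⟨d1, b1, t1, -, hb1, hvsum1⟩ :=
      decompL F M N v ⊤ (fun j : ↥sP => (j : M × N).1) (fun j : ↥sP => (j : M × N).2)
        (fun j => Submodule.mem_top) hv2
    have hb1M0 : ∀ k, b1 k ∈ M0 := by
      intro k
      obtain ⟨f, hf⟩ := hb1 k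
      rw [hf]
      exact Submodule.subset_span ⟨v, hv, f, rfl⟩
    obtain ⟨d2, b2, t2, hb2, ht2, hvsum2⟩ := decompR F M N v M0 b1 t1 hb1M0 hvsum1
    have ht2N0 : ∀ k, t2 k ∈ N0 := by
      intro k
      obtain ⟨g, hg⟩ := ht2 k
      rw [hg]
      exact Submodule.subset_span ⟨v, hv, g, rfl⟩
    rw [hvsum2]
    apply Submodule.sum_mem
    intro k _
    exact ⟨(⟨b2 k, hM0le (hb2 k)⟩ : (finPart F H M).restrictScalars F) ⊗ₜ[F]
      (⟨t2 k, hN0le (ht2N0 k)⟩ : (finPart F H N).restrictScalars F), rfl⟩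
  · -- easy direction
    rw [TensorProduct.range_mapIncl, Submodule.map₂_eq_span_image2]
    apply Submodule.span_le.mpr
    rintro _ ⟨m, hm, n, hn, rfl⟩
    rw [SetLike.mem_coe, Submodule.restrictScalars_mem] at hm hn
    have hdirM : DirectedOn (· ≤ ·)
        {p : Submodule H M | FiniteDimensional F (p.restrictScalars F)} := by
      rintro p hp q hq
      refine ⟨p ⊔ q, ?_, le_sup_left, le_sup_right⟩
      have hres : (p ⊔ q).restrictScalars F
          = p.restrictScalars F ⊔ q.restrictScalars F := by
        ext x
        simp only [Submodule.restrictScalars_mem, Submodule.mem_sup]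
      rw [Set.mem_setOf_eq, hres]
      haveI : FiniteDimensional F (p.restrictScalars F) := hp
      haveI : FiniteDimensional F (q.restrictScalars F) := hq
      exact Submodule.finiteDimensional_sup _ _
    have hdirN : DirectedOn (· ≤ ·)
        {p : Submodule H N | FiniteDimensional F (p.restrictScalars F)} := by
      rintro p hp q hq
      refine ⟨p ⊔ q, ?_, le_sup_left, le_sup_right⟩
      have hres : (p ⊔ q).restrictScalars F
          = p.restrictScalars F ⊔ q.restrictScalars F := by
        ext x
        simp only [Submodule.restrictScalars_mem, Submodule.mem_sup]
      rw [Set.mem_setOf_eq, hres]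
      haveI : FiniteDimensional F (p.restrictScalars F) := hp
      haveI : FiniteDimensional F (q.restrictScalars F) := hq
      exact Submodule.finiteDimensional_sup _ _
    have hbotM : (⊥ : Submodule H M) ∈
        {p : Submodule H M | FiniteDimensional F (p.restrictScalars F)} := by
      rw [Set.mem_setOf_eq, Submodule.restrictScalars_bot]
      infer_instance
    have hbotN : (⊥ : Submodule H N) ∈
        {p : Submodule H N | FiniteDimensional F (p.restrictScalars F)} := by
      rw [Set.mem_setOf_eq, Submodule.restrictScalars_bot]
      infer_instance
    obtain ⟨p, hp, hmp⟩ := (Submodule.mem_sSup_of_directed ⟨⊥, hbotM⟩ hdirM).mp hm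
    obtain ⟨q, hq, hnq⟩ := (Submodule.mem_sSup_of_directed ⟨⊥, hbotN⟩ hdirN).mp hn
    haveI : FiniteDimensional F (p.restrictScalars F) := hp
    haveI : FiniteDimensional F (q.restrictScalars F) := hq
    have hmemS : LinearMap.range (TensorProduct.mapIncl (p.restrictScalars F)
          (q.restrictScalars F)) ∈
        {p' : Submodule F (M ⊗[F] N) |
          (∀ h : H, ∀ v ∈ p', hopfTensorAction F H M N h v ∈ p') ∧
            FiniteDimensional F p'} := by
      refine ⟨?_, ?_⟩
      · -- invariance
        intro h v hvR
        have hcomap : LinearMap.range (TensorProduct.mapIncl (p.restrictScalars F)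
              (q.restrictScalars F))
            ≤ Submodule.comap (hopfTensorAction F H M N h)
                (LinearMap.range (TensorProduct.mapIncl (p.restrictScalars F)
                  (q.restrictScalars F))) := by
          rw [TensorProduct.range_mapIncl, Submodule.map₂_eq_span_image2]
          apply Submodule.span_le.mpr
          rintro _ ⟨m', hm', n', hn', rfl⟩
          rw [SetLike.mem_coe, Submodule.mem_comap, hopfTensorAction_eq]
          have hz : ∀ z : H ⊗[F] H, thetAux F H M N z (m' ⊗ₜ[F] n') ∈
              Submodule.span F (Set.image2 (· ⊗ₜ[F] ·)
                ↑(p.restrictScalars F) ↑(q.restrictScalars F)) := by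
            intro z
            induction z using TensorProduct.induction_on with
            | zero => simp
            | tmul b c =>
              rw [thetAux_tmul]
              refine Submodule.subset_span (Set.mem_image2_of_mem ?_ ?_)
              · rw [SetLike.mem_coe, Submodule.restrictScalars_mem] at hm' ⊢
                exact p.smul_mem b hm'
              · rw [SetLike.mem_coe, Submodule.restrictScalars_mem] at hn' ⊢
                exact q.smul_mem c hn'
            | add u w hu hw =>
              rw [map_add, LinearMap.add_apply]
              exact Submodule.add_mem _ hu hw
          exact hz _
        exact hcomap hvR
      · -- finite dimensionality
        infer_instance
    exact Submodule.mem_sSup_of_mem hmemS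
      ⟨(⟨m, hmp⟩ : p.restrictScalars F) ⊗ₜ[F] (⟨n, hnq⟩ : q.restrictScalars F), rfl⟩
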